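/- Let k₁,k₂>0, K≥2, J(z)=k₁/z¹²−k₂/z⁶ for z>0 and +∞ for z≤0, J_j(z):=J(jz), δ₁:=(2k₁/k₂)^{1/6}, γ:=(2k₁/k₂)^{1/6}·((Σ_{j=1}^K j^{-12})/(Σ_{j=1}^K j^{-6}))^{1/6}, and c_j:=−jJ'(jγ)/J'(γ) for j=2,…,K. For j=2,…,K define J_{0,j}(z):=J_j(z)+(c_j/j)·inf{Σ_{s=1}^j J_1(z_s) : z_1,…,z_j∈ℝ, Σ_{s=1}^j z_s=jz} and ψ_j(z):=J_j(z)+c_j J_1(z). Then for every j=2,…,K: J_{0,j}(z)=ψ_j(z) for all z≤δ₁, and γ is the unique minimizer of J_{0,j} over ℝ. -/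

import Mathlib

open Filter Finset Set

noncomputable section

/-- The Lennard-Jones potential, extended by `+∞` on `(-∞,0]`. -/
def LJ (k₁ k₂ : ℝ) (z : ℝ) : EReal :=
  if 0 < z then ((k₁ / z ^ 12 - k₂ / z ^ 6 : ℝ) : EReal) else ⊤

/-- The real-valued Lennard-Jones formula (used for derivatives on `(0,∞)`). -/
def LJr (k₁ k₂ : ℝ) (z : ℝ) : ℝ := k₁ / z ^ 12 - k₂ / z ^ 6

/-- The unique minimizer of the Lennard-Jones potential. -/
def delta1 (k₁ k₂ : ℝ) : ℝ := (2 * k₁ / k₂) ^ ((1 : ℝ) / 6)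

/-- The unique minimizer `γ` of the Cauchy–Born energy density `J_CB(z)=Σ_{j=1}^K J(jz)`. -/
def gammaLJ (k₁ k₂ : ℝ) (K : ℕ) : ℝ :=
  (2 * k₁ / k₂) ^ ((1 : ℝ) / 6) *
    ((∑ j ∈ Finset.Icc 1 K, 1 / (j : ℝ) ^ 12) /
      (∑ j ∈ Finset.Icc 1 K, 1 / (j : ℝ) ^ 6)) ^ ((1 : ℝ) / 6)

/-- The splitting coefficients `c_j := -j·J'(jγ)/J'(γ)`, `j = 2,…,K`. -/
def cLJ (k₁ k₂ : ℝ) (K : ℕ) (j : ℕ) : ℝ :=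
  -((j : ℝ) * deriv (LJr k₁ k₂) ((j : ℝ) * gammaLJ k₁ k₂ K)) /
    deriv (LJr k₁ k₂) (gammaLJ k₁ k₂ K)

/-- `inf{Σ_{s=1}^j J_1(z_s) : Σ_{s=1}^j z_s = jz}`. -/
def infConv (k₁ k₂ : ℝ) (j : ℕ) (z : ℝ) : EReal :=
  sInf {y : EReal | ∃ p : Fin j → ℝ, (∑ s, p s) = j * z ∧ y = ∑ s, LJ k₁ k₂ (p s)}

/-- The effective potential `J_{0,j}(z) = J_j(z) + (c_j/j)·inf{Σ J_1(z_s) : Σ z_s = jz}`. -/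
def J0LJ (k₁ k₂ : ℝ) (K j : ℕ) (z : ℝ) : EReal :=
  LJ k₁ k₂ ((j : ℝ) * z) + ((cLJ k₁ k₂ K j / j : ℝ) : EReal) * infConv k₁ k₂ j z

/-- `ψ_j(z) = J_j(z) + c_j·J_1(z)`. -/
def psiLJ (k₁ k₂ : ℝ) (K j : ℕ) (z : ℝ) : EReal :=
  LJ k₁ k₂ ((j : ℝ) * z) + ((cLJ k₁ k₂ K j : ℝ) : EReal) * LJ k₁ k₂ z

/-! ### Auxiliary lemmas -/

lemma hasDerivAt_LJr (k₁ k₂ : ℝ) {x : ℝ} (hx : x ≠ 0) :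
    HasDerivAt (LJr k₁ k₂) (6 * (k₂ * x ^ 6 - 2 * k₁) / x ^ 13) x := by
  have h12 : x ^ 12 ≠ 0 := pow_ne_zero _ hx
  have h6 : x ^ 6 ≠ 0 := pow_ne_zero _ hx
  have h1 : HasDerivAt (fun z : ℝ => k₁ / z ^ 12)
      (-(k₁ * (12 * x ^ 11)) / (x ^ 12) ^ 2) x := by
    simpa [Pi.div_def] using (HasDerivAt.div (hasDerivAt_const x k₁) (hasDerivAt_pow 12 x) h12)
  have h2 : HasDerivAt (fun z : ℝ => k₂ / z ^ 6)
      (-(k₂ * (6 * x ^ 5)) / (x ^ 6) ^ 2) x := by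
    simpa [Pi.div_def] using (HasDerivAt.div (hasDerivAt_const x k₂) (hasDerivAt_pow 6 x) h6)
  have := h1.sub h2
  refine this.congr_deriv ?_
  field_simp
  ring

lemma deriv_LJr (k₁ k₂ : ℝ) {x : ℝ} (hx : x ≠ 0) :
    deriv (LJr k₁ k₂) x = 6 * (k₂ * x ^ 6 - 2 * k₁) / x ^ 13 :=
  (hasDerivAt_LJr k₁ k₂ hx).deriv

/-- Tangent line at `a` with `k₂a⁶ ≤ 2k₁` lies below `LJr` on `(0,∞)`. -/
lemma LJr_tangent (k₁ k₂ : ℝ) (hk₁ : 0 < k₁) {a x : ℝ} (ha : 0 < a)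
    (haδ : k₂ * a ^ 6 ≤ 2 * k₁) (hx : 0 < x) :
    LJr k₁ k₂ a + (6 * (k₂ * a ^ 6 - 2 * k₁) / a ^ 13) * (x - a) ≤ LJr k₁ k₂ x := by
  have hane := ne_of_gt ha
  have hxne := ne_of_gt hx
  set P1 : ℝ := a^11 + 2*x*a^10 + 3*x^2*a^9 + 4*x^3*a^8 + 5*x^4*a^7 + 6*x^5*a^6
      + 7*x^6*a^5 + 8*x^7*a^4 + 9*x^8*a^3 + 10*x^9*a^2 + 11*x^10*a + 12*x^11 with hP1
  set P2 : ℝ := x^6*a^5 + 2*x^7*a^4 + 3*x^8*a^3 + 4*x^9*a^2 + 5*x^10*a + 6*x^11 with hP2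
  have hdiff : LJr k₁ k₂ x - (LJr k₁ k₂ a + (6 * (k₂ * a ^ 6 - 2 * k₁) / a ^ 13) * (x - a))
      = (x - a)^2 * (k₁ * P1 - (k₂ * a^6) * P2) / (x^12 * a^13) := by
    rw [hP1, hP2]; unfold LJr; field_simp; ring
  have hP2nn : 0 ≤ P2 := by rw [hP2]; positivity
  have hQ : 0 ≤ k₁ * P1 - (k₂ * a^6) * P2 := by
    have h1 : (k₂ * a^6) * P2 ≤ (2*k₁) * P2 := mul_le_mul_of_nonneg_right haδ hP2nn
    have h2 : 0 ≤ k₁ * P1 - (2*k₁) * P2 := by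
      have : k₁ * P1 - (2*k₁) * P2 = k₁ * (a^11 + 2*x*a^10 + 3*x^2*a^9 + 4*x^3*a^8
          + 5*x^4*a^7 + 6*x^5*a^6 + 5*x^6*a^5 + 4*x^7*a^4 + 3*x^8*a^3 + 2*x^9*a^2 + x^10*a) := by
        rw [hP1, hP2]; ring
      rw [this]; positivity
    linarith
  rw [← sub_nonneg, hdiff]
  exact div_nonneg (mul_nonneg (sq_nonneg _) hQ) (by positivity)

/-- Global lower bound `J(x) ≥ -k₂²/(4k₁)` for `x > 0`. -/
lemma LJr_ge_min (k₁ k₂ : ℝ) (hk₁ : 0 < k₁) {x : ℝ} (hx : 0 < x) :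
    -(k₂^2 / (4*k₁)) ≤ LJr k₁ k₂ x := by
  have hxne := ne_of_gt hx
  have h : LJr k₁ k₂ x - (-(k₂^2/(4*k₁))) = (2*k₁ - k₂*x^6)^2 / (4*k₁*x^12) := by
    unfold LJr; field_simp; ring
  nlinarith [h, div_nonneg (sq_nonneg (2*k₁ - k₂*x^6)) (by positivity : (0:ℝ) ≤ 4*k₁*x^12)]

/-- `LJr` is monotone past the point where `k₂w⁶ ≥ 4k₁`. -/
lemma LJr_mono (k₁ k₂ : ℝ) (hk₁ : 0 < k₁) {w p : ℝ} (hw : 0 < w) (hwp : w ≤ p)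
    (h4 : 4 * k₁ ≤ k₂ * w ^ 6) : LJr k₁ k₂ w ≤ LJr k₁ k₂ p := by
  have hp : 0 < p := lt_of_lt_of_le hw hwp
  have hW : (0:ℝ) < w^6 := by positivity
  have hP : (0:ℝ) < p^6 := by positivity
  have hWP : w^6 ≤ p^6 := pow_le_pow_left₀ hw.le hwp 6
  have hdiff : LJr k₁ k₂ p - LJr k₁ k₂ w
      = (p^6 - w^6) * (k₂ * p^6 * w^6 - k₁ * (p^6 + w^6)) / ((p^6)^2 * (w^6)^2) := by
    unfold LJr; field_simp; ring
  rw [← sub_nonneg, hdiff]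
  apply div_nonneg _ (by positivity)
  apply mul_nonneg (by linarith)
  nlinarith [mul_le_mul_of_nonneg_left hWP (le_of_lt hP)]

lemma quad_identity (A B x g : ℝ) (hA : 0 < A) (hx : 0 < x) (hg : 0 < g)
    (hgAB : B * g = 2 * A) :
    (A/x^2 - B/x) - (A/g^2 - B/g) = (2*A - B*x)^2 / (4*A*x^2) := by
  have hB : B = 2*A/g := by field_simp at hgAB ⊢; linarith
  subst hB
  field_simp
  ring

lemma sum_six_le (K : ℕ) (hK : 1 ≤ K) :
    (∑ j ∈ Finset.Icc 1 K, 1 / (j : ℝ) ^ 6) ≤ 2 - 1 / (K : ℝ) := by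
  induction K with
  | zero => omega
  | succ n ih =>
    rcases Nat.eq_or_lt_of_le hK with h | h
    · rw [← h]; norm_num
    · have hn : 1 ≤ n := by omega
      have ihn := ih hn
      rw [Finset.sum_Icc_succ_top (by omega : 1 ≤ n + 1)]
      have hpos : (0:ℝ) < n := by exact_mod_cast hn
      have hpos1 : (0:ℝ) < (n:ℝ) + 1 := by linarith
      have key : 1 / ((n:ℝ) + 1) ^ 6 ≤ 1 / (n:ℝ) - 1 / ((n:ℝ) + 1) := by
        rw [div_sub_div _ _ (ne_of_gt hpos) (ne_of_gt hpos1)]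
        rw [div_le_div_iff₀ (by positivity) (by positivity)]
        have h3 : (1:ℝ) ≤ ((n:ℝ)+1)^4 := one_le_pow₀ (by linarith)
        nlinarith [mul_pos hpos hpos1]
      push_cast
      linarith

lemma one_le_sum_inv_pow (K n : ℕ) (hK : 1 ≤ K) :
    (1:ℝ) ≤ ∑ j ∈ Finset.Icc 1 K, 1 / (j : ℝ) ^ n := by
  have h1 : (1:ℕ) ∈ Finset.Icc 1 K := by simp [hK]
  have := Finset.single_le_sum (f := fun j : ℕ => 1 / (j:ℝ)^n)
    (fun i _ => by positivity) h1
  simpa using this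

lemma sum_twelve_lt_six (K : ℕ) (hK : 2 ≤ K) :
    (∑ j ∈ Finset.Icc 1 K, 1 / (j : ℝ) ^ 12) < ∑ j ∈ Finset.Icc 1 K, 1 / (j : ℝ) ^ 6 := by
  apply Finset.sum_lt_sum
  · intro i hi
    simp only [Finset.mem_Icc] at hi
    have h1 : (1:ℝ) ≤ (i:ℝ) := by exact_mod_cast hi.1
    apply div_le_div_of_nonneg_left (by norm_num) (by positivity)
    have h6 : (1:ℝ) ≤ (i:ℝ)^6 := one_le_pow₀ h1
    calc (i:ℝ)^6 = (i:ℝ)^6 * 1 := by ring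
    _ ≤ (i:ℝ)^6 * (i:ℝ)^6 := by nlinarith
    _ = (i:ℝ)^12 := by ring
  · exact ⟨2, by simp [Finset.mem_Icc, hK], by norm_num⟩

lemma rpow_sixth_pow {y : ℝ} (hy : 0 ≤ y) : (y ^ ((1:ℝ)/6)) ^ (6:ℕ) = y := by
  rw [← Real.rpow_natCast (y ^ ((1:ℝ)/6)) 6, ← Real.rpow_mul hy]
  norm_num

lemma ereal_coe_sum {ι : Type*} (s : Finset ι) (f : ι → ℝ) :
    ((∑ i ∈ s, f i : ℝ) : EReal) = ∑ i ∈ s, ((f i : ℝ) : EReal) :=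
  map_sum (⟨⟨Real.toEReal, EReal.coe_zero⟩, EReal.coe_add⟩ : ℝ →+ EReal) f s
set_option maxHeartbeats 2000000 in
/-- for every `j = 2,…,K`, the effective potential `J_{0,j}` coincides with
`ψ_j` on `(-∞,δ₁]`, and `γ` is the unique minimizer of `J_{0,j}` over `ℝ`. -/
theorem effective_potential_eq_psi_and_min (k₁ k₂ : ℝ) (hk₁ : 0 < k₁) (hk₂ : 0 < k₂)
    (K : ℕ) (hK : 2 ≤ K) :
    ∀ j ∈ Finset.Icc 2 K,
      (∀ z : ℝ, z ≤ delta1 k₁ k₂ → J0LJ k₁ k₂ K j z = psiLJ k₁ k₂ K j z) ∧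
      (∀ z : ℝ, J0LJ k₁ k₂ K j (gammaLJ k₁ k₂ K) ≤ J0LJ k₁ k₂ K j z) ∧
      (∀ z : ℝ, J0LJ k₁ k₂ K j z = J0LJ k₁ k₂ K j (gammaLJ k₁ k₂ K) →
        z = gammaLJ k₁ k₂ K) := by
  intro j hj
  rw [Finset.mem_Icc] at hj
  obtain ⟨hj2, hjK⟩ := hj
  have hj0 : (j:ℝ) ≠ 0 := by positivity
  have hjR : (2:ℝ) ≤ (j:ℝ) := by exact_mod_cast hj2
  have hjpos : (0:ℝ) < (j:ℝ) := by linarith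
  -- sums
  set S12 := ∑ i ∈ Finset.Icc 1 K, 1 / (i : ℝ) ^ 12 with hS12def
  set S6 := ∑ i ∈ Finset.Icc 1 K, 1 / (i : ℝ) ^ 6 with hS6def
  have hS12_1 : (1:ℝ) ≤ S12 := one_le_sum_inv_pow K 12 (by omega)
  have hS6_1 : (1:ℝ) ≤ S6 := one_le_sum_inv_pow K 6 (by omega)
  have hS6_2 : S6 < 2 := by
    have h := sum_six_le K (by omega)
    have : (0:ℝ) < 1 / (K:ℝ) := by positivity
    rw [← hS6def] at h
    linarith
  have hlt : S12 < S6 := by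
    have := sum_twelve_lt_six K hK
    rwa [← hS12def, ← hS6def] at this
  have hS6pos : (0:ℝ) < S6 := by linarith
  set r := S12 / S6 with hrdef
  have hrpos : 0 < r := div_pos (by linarith) hS6pos
  have hr1 : r < 1 := (div_lt_one hS6pos).2 hlt
  have hrhalf : 1/2 < r := by
    rw [hrdef, lt_div_iff₀ hS6pos]; linarith
  -- delta and gamma
  set δ := delta1 k₁ k₂ with hδdef
  set γ := gammaLJ k₁ k₂ K with hγdef
  have hc1pos : (0:ℝ) < 2*k₁/k₂ := by positivity
  have hδ6 : δ^6 = 2*k₁/k₂ := by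
    rw [hδdef, delta1]; exact rpow_sixth_pow hc1pos.le
  have hδpos : 0 < δ := by
    rw [hδdef, delta1]; exact Real.rpow_pos_of_pos hc1pos _
  have hγ6 : γ^6 = (2*k₁/k₂) * r := by
    rw [hγdef, gammaLJ, mul_pow, ← hS12def, ← hS6def, ← hrdef,
      rpow_sixth_pow hc1pos.le, rpow_sixth_pow hrpos.le]
  have hγpos : 0 < γ := by
    rw [hγdef, gammaLJ, ← hS12def, ← hS6def, ← hrdef]
    exact mul_pos (Real.rpow_pos_of_pos hc1pos _) (Real.rpow_pos_of_pos hrpos _)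
  have hγne : γ ≠ 0 := ne_of_gt hγpos
  have hγδ6 : γ^6 < δ^6 := by rw [hγ6, hδ6]; nlinarith
  have hγδ : γ < δ := by
    by_contra h
    push_neg at h
    exact absurd (pow_le_pow_left₀ hδpos.le h 6) (not_le.2 hγδ6)
  -- m
  set m := ((j:ℝ))^6 with hmdef
  have hm64 : (64:ℝ) ≤ m := by
    rw [hmdef]
    calc (64:ℝ) = 2^6 := by norm_num
    _ ≤ (j:ℝ)^6 := pow_le_pow_left₀ (by norm_num) hjR 6
  have hmpos : (0:ℝ) < m := by linarith
  have hmr : 1 < m * r := by nlinarith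
  -- derivative values and c
  have hk2γ : k₂ * γ^6 = 2*k₁*r := by rw [hγ6]; field_simp
  have hd1 : deriv (LJr k₁ k₂) γ = 12*k₁*(r-1)/γ^13 := by
    rw [deriv_LJr k₁ k₂ hγne, hk2γ]; ring_nf
  have hjγpos : (0:ℝ) < (j:ℝ)*γ := mul_pos hjpos hγpos
  have hd2 : deriv (LJr k₁ k₂) ((j:ℝ)*γ) = 12*k₁*(m*r-1)/((j:ℝ)^13*γ^13) := by
    rw [deriv_LJr k₁ k₂ (ne_of_gt hjγpos)]
    have h6 : ((j:ℝ)*γ)^6 = m*γ^6 := by rw [hmdef]; ring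
    have h13 : ((j:ℝ)*γ)^13 = (j:ℝ)^13*γ^13 := by ring
    rw [h6, h13]
    have : k₂ * (m * γ^6) = 2*k₁*(m*r) := by rw [hγ6]; field_simp
    rw [mul_comm k₂ (m*γ^6)] at this
    rw [mul_comm k₂ (m*γ^6), this]
    ring_nf
  set c := cLJ k₁ k₂ K j with hcdef
  have hc : c = (m*r-1)/(m^2*(1-r)) := by
    rw [hcdef, cLJ, ← hγdef, hd1, hd2]
    have hγ13 : γ^13 ≠ 0 := pow_ne_zero _ hγne
    have hj13 : ((j:ℝ))^13 ≠ 0 := pow_ne_zero _ hj0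
    have hr1' : r - 1 ≠ 0 := by linarith
    have h1r : 1 - r ≠ 0 := by linarith
    have hm2 : m^2 ≠ 0 := by positivity
    rw [hmdef]
    field_simp
    ring
  have hcpos : 0 < c := by
    rw [hc]
    exact div_pos (by linarith) (mul_pos (by positivity) (by linarith))
  -- A, B and the psi representation
  set A := k₁ * (1/m^2 + c) with hAdef
  set B := k₂ * (1/m + c) with hBdef
  have hApos : 0 < A := by
    rw [hAdef]; apply mul_pos hk₁; positivity
  have hBpos : 0 < B := by
    rw [hBdef]; apply mul_pos hk₂; positivity
  have hgAB : B * γ^6 = 2*A := by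
    rw [hAdef, hBdef, hγ6, hc]
    have h1r : (1:ℝ) - r ≠ 0 := by linarith
    have hm0 : m ≠ 0 := ne_of_gt hmpos
    field_simp
    ring
  have hγ6pos : (0:ℝ) < γ^6 := by positivity
  have hpsir : ∀ z : ℝ, z ≠ 0 →
      LJr k₁ k₂ ((j:ℝ)*z) + c * LJr k₁ k₂ z = A/(z^6)^2 - B/z^6 := by
    intro z hz
    rw [hAdef, hBdef, hmdef]
    unfold LJr
    field_simp
    ring
  have hψmin : ∀ z:ℝ, 0 < z →
      A/(γ^6)^2 - B/γ^6 ≤ A/(z^6)^2 - B/z^6 := by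
    intro z hz
    have hz6 : (0:ℝ) < z^6 := by positivity
    have hid := quad_identity A B (z^6) (γ^6) hApos hz6 hγ6pos hgAB
    have hnn : (0:ℝ) ≤ (2*A - B*z^6)^2 / (4*A*(z^6)^2) :=
      div_nonneg (sq_nonneg _) (by positivity)
    linarith
  have hψeq : ∀ z:ℝ, 0 < z →
      A/(z^6)^2 - B/z^6 = A/(γ^6)^2 - B/γ^6 → z = γ := by
    intro z hz heq
    have hz6 : (0:ℝ) < z^6 := by positivity
    have hid := quad_identity A B (z^6) (γ^6) hApos hz6 hγ6pos hgAB
    rw [heq, sub_self] at hid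
    have h4 : (4*A*(z^6)^2 : ℝ) ≠ 0 := by positivity
    have hsq : (2*A - B*z^6)^2 = 0 := by
      rcases div_eq_zero_iff.mp hid.symm with h | h
      · exact h
      · exact absurd h h4
    have hlin : 2*A - B*z^6 = 0 := by
      have := sq_eq_zero_iff.mp hsq
      exact this
    have hz6γ : z^6 = γ^6 := by
      have h1 : B * z^6 = B * γ^6 := by rw [hgAB]; linarith
      exact mul_left_cancel₀ (ne_of_gt hBpos) h1
    by_contra hne
    rcases lt_or_gt_of_ne hne with h | h
    · exact absurd hz6γ (ne_of_lt (by exact pow_lt_pow_left₀ h hz.le (by norm_num)))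
    · exact absurd hz6γ.symm (ne_of_lt (by exact pow_lt_pow_left₀ h hγpos.le (by norm_num)))
  -- the strict inequality for z > δ
  have hstar : A/(γ^6)^2 - B/γ^6 < LJr k₁ k₂ ((j:ℝ)*δ) + c * (-(k₂^2/(4*k₁))) := by
    have hval : A/(γ^6)^2 - B/γ^6 = -(B^2/(4*A)) := by
      have hγ6B : γ^6 = 2*A/B := by field_simp at hgAB ⊢; linarith
      rw [hγ6B]
      field_simp
      ring
    have e6 : ((j:ℝ)*δ)^6 = m*(2*k₁/k₂) := by rw [mul_pow, hδ6, hmdef]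
    have e12 : ((j:ℝ)*δ)^12 = (m*(2*k₁/k₂))^2 := by
      rw [show ((j:ℝ)*δ)^12 = (((j:ℝ)*δ)^6)^2 by ring, e6]
    have hLJδ : LJr k₁ k₂ ((j:ℝ)*δ) = k₂^2/(4*k₁) * (1/m^2 - 2/m) := by
      unfold LJr
      rw [e12, e6]
      field_simp
      ring
    rw [hval, hLJδ, hAdef, hBdef]
    have hm0 : m ≠ 0 := ne_of_gt hmpos
    have hden : (0:ℝ) < (1/m)^2 + c := by positivity
    have hkey : k₂^2/(4*k₁) * (1/m^2 - 2/m) + c * (-(k₂^2/(4*k₁)))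
        - (-((k₂*(1/m + c))^2/(4*(k₁*(1/m^2 + c)))))
        = (k₂^2/(4*k₁)) * ((1/m)^2*(1/m - 1)^2/((1/m)^2 + c)) := by
      field_simp
      ring
    have hfrac : (0:ℝ) < (k₂^2/(4*k₁)) * ((1/m)^2*(1/m - 1)^2/((1/m)^2 + c)) := by
      have h1m : 1/m < 1 := by
        rw [div_lt_one hmpos]; linarith
      have h2 : (0:ℝ) < (1/m - 1)^2 :=
        lt_of_le_of_ne (sq_nonneg _) (Ne.symm (pow_ne_zero 2 (by linarith)))
      apply mul_pos (by positivity)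
      exact div_pos (mul_pos (by positivity) h2) hden
    linarith
  -- EReal basics
  have hLJcoe : ∀ x:ℝ, 0 < x → LJ k₁ k₂ x = ((LJr k₁ k₂ x : ℝ) : EReal) := by
    intro x hx; rw [LJ, if_pos hx]; rfl
  have hLJtop : ∀ x:ℝ, ¬ (0 < x) → LJ k₁ k₂ x = ⊤ := by
    intro x hx; rw [LJ, if_neg hx]
  -- lower bound for infConv from affine minorants of LJr
  have hinf_ge : ∀ (z u v : ℝ), (∀ x : ℝ, 0 < x → u + v * x ≤ LJr k₁ k₂ x) →
      (((j:ℝ) * u + v * ((j:ℝ)*z) : ℝ) : EReal) ≤ infConv k₁ k₂ j z := by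
    intro z u v hb
    apply le_sInf
    rintro y ⟨p, hsum, rfl⟩
    have hterm : ∀ s : Fin j, ((u + v * p s : ℝ) : EReal) ≤ LJ k₁ k₂ (p s) := by
      intro s
      by_cases hps : 0 < p s
      · rw [hLJcoe _ hps]; exact_mod_cast hb _ hps
      · rw [hLJtop _ hps]; exact le_top
    calc (((j:ℝ)*u + v*((j:ℝ)*z) : ℝ) : EReal)
        = ((∑ s : Fin j, (u + v * p s) : ℝ) : EReal) := by
          congr 1
          rw [Finset.sum_add_distrib, Finset.sum_const, ← Finset.mul_sum, hsum]
          simp [Finset.card_univ]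
      _ = ∑ s : Fin j, ((u + v * p s : ℝ) : EReal) := ereal_coe_sum _ _
      _ ≤ ∑ s : Fin j, LJ k₁ k₂ (p s) := Finset.sum_le_sum (fun s _ => hterm s)
  -- upper bound : equidistributed configuration
  have hinf_le : ∀ z : ℝ, 0 < z →
      infConv k₁ k₂ j z ≤ (((j:ℝ) * LJr k₁ k₂ z : ℝ) : EReal) := by
    intro z hz
    apply sInf_le
    refine ⟨fun _ => z, ?_, ?_⟩
    · simp [Finset.sum_const, Finset.card_univ, nsmul_eq_mul]
    · calc (((j:ℝ) * LJr k₁ k₂ z : ℝ) : EReal)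
          = ((∑ _s : Fin j, LJr k₁ k₂ z : ℝ) : EReal) := by
            congr 1
            simp [Finset.sum_const, Finset.card_univ, nsmul_eq_mul]
        _ = ∑ _s : Fin j, ((LJr k₁ k₂ z : ℝ) : EReal) := ereal_coe_sum _ _
        _ = ∑ _s : Fin j, LJ k₁ k₂ z :=
            Finset.sum_congr rfl (fun s _ => (hLJcoe z hz).symm)
  -- exact value on (0, δ]
  have hinf_eq : ∀ z : ℝ, 0 < z → z ≤ δ →
      infConv k₁ k₂ j z = (((j:ℝ) * LJr k₁ k₂ z : ℝ) : EReal) := by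
    intro z hz hzδ
    refine le_antisymm (hinf_le z hz) ?_
    have hz6 : k₂ * z^6 ≤ 2*k₁ := by
      have h1 : z^6 ≤ δ^6 := pow_le_pow_left₀ hz.le hzδ 6
      rw [hδ6] at h1
      calc k₂*z^6 ≤ k₂*(2*k₁/k₂) := mul_le_mul_of_nonneg_left h1 hk₂.le
      _ = 2*k₁ := by field_simp
    have hb : ∀ x : ℝ, 0 < x →
        (LJr k₁ k₂ z - (6*(k₂*z^6-2*k₁)/z^13)*z) + (6*(k₂*z^6-2*k₁)/z^13) * x
          ≤ LJr k₁ k₂ x :=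
      fun x hx => by linarith only [LJr_tangent k₁ k₂ hk₁ hz hz6 hx]
    have h2 := hinf_ge z _ _ hb
    rwa [show (j:ℝ)*(LJr k₁ k₂ z - (6*(k₂*z^6-2*k₁)/z^13)*z)
        + (6*(k₂*z^6-2*k₁)/z^13)*((j:ℝ)*z) = (j:ℝ)*LJr k₁ k₂ z by ring] at h2
  -- value ⊤ on (-∞,0]
  have hinf_top : ∀ z:ℝ, z ≤ 0 → infConv k₁ k₂ j z = ⊤ := by
    intro z hz
    rw [infConv, sInf_eq_top]
    rintro y ⟨p, hsum, rfl⟩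
    have hex : ∃ s₀ : Fin j, ¬ (0 < p s₀) := by
      by_contra hall
      push_neg at hall
      have hpos : 0 < ∑ s, p s :=
        Finset.sum_pos (fun s _ => hall s) ⟨⟨0, by omega⟩, Finset.mem_univ _⟩
      rw [hsum] at hpos
      exact absurd hpos (not_lt.2 (mul_nonpos_of_nonneg_of_nonpos hjpos.le hz))
    obtain ⟨s₀, hs₀⟩ := hex
    rw [← Finset.add_sum_erase _ _ (Finset.mem_univ s₀), hLJtop _ hs₀]
    apply EReal.top_add_of_ne_bot
    have hge : ((∑ _s ∈ Finset.univ.erase s₀, (-(k₂^2/(4*k₁))) : ℝ) : EReal)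
        ≤ ∑ s ∈ Finset.univ.erase s₀, LJ k₁ k₂ (p s) := by
      rw [ereal_coe_sum]
      apply Finset.sum_le_sum
      intro i _
      by_cases hpi : 0 < p i
      · rw [hLJcoe _ hpi]
        exact_mod_cast LJr_ge_min k₁ k₂ hk₁ hpi
      · rw [hLJtop _ hpi]; exact le_top
    exact (lt_of_lt_of_le (EReal.bot_lt_coe _) hge).ne'
  -- Part 1
  have hpart1 : ∀ z : ℝ, z ≤ δ → J0LJ k₁ k₂ K j z = psiLJ k₁ k₂ K j z := by
    intro z hzδ
    by_cases hz : 0 < z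
    · rw [J0LJ, psiLJ, ← hcdef, hinf_eq z hz hzδ, hLJcoe _ hz]
      congr 1
      rw [← EReal.coe_mul, ← EReal.coe_mul]
      congr 1
      field_simp
    · have hjz : ¬ (0 < (j:ℝ)*z) := by
        push_neg at hz ⊢
        exact mul_nonpos_of_nonneg_of_nonpos hjpos.le hz
      rw [J0LJ, psiLJ, ← hcdef, hLJtop _ hjz, hinf_top z (not_lt.1 hz), hLJtop _ hz]
      rw [EReal.mul_top_of_pos (by exact_mod_cast div_pos hcpos hjpos),
        EReal.mul_top_of_pos (by exact_mod_cast hcpos)]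
  -- value at γ
  have hJ0γ : J0LJ k₁ k₂ K j γ = ((A/(γ^6)^2 - B/γ^6 : ℝ) : EReal) := by
    rw [J0LJ, ← hcdef, hinf_eq γ hγpos hγδ.le, hLJcoe _ hjγpos,
      ← EReal.coe_mul, ← EReal.coe_add]
    have hre : LJr k₁ k₂ ((j:ℝ)*γ) + (c/(j:ℝ))*((j:ℝ)*LJr k₁ k₂ γ)
        = A/(γ^6)^2 - B/γ^6 := by
      rw [← hpsir γ hγne]
      field_simp
    exact_mod_cast congrArg Real.toEReal hre
  -- Parts 2 & 3 bundled
  have hpart23 : ∀ z : ℝ, J0LJ k₁ k₂ K j γ ≤ J0LJ k₁ k₂ K j z ∧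
      (J0LJ k₁ k₂ K j z = J0LJ k₁ k₂ K j γ → z = γ) := by
    intro z
    by_cases hz : 0 < z
    · by_cases hzδ : z ≤ δ
      · -- 0 < z ≤ δ
        have hz0 : J0LJ k₁ k₂ K j z = ((A/(z^6)^2 - B/z^6 : ℝ) : EReal) := by
          rw [J0LJ, ← hcdef, hinf_eq z hz hzδ, hLJcoe _ (mul_pos hjpos hz),
            ← EReal.coe_mul, ← EReal.coe_add]
          have hre : LJr k₁ k₂ ((j:ℝ)*z) + (c/(j:ℝ))*((j:ℝ)*LJr k₁ k₂ z)
              = A/(z^6)^2 - B/z^6 := by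
            rw [← hpsir z (ne_of_gt hz)]
            field_simp
          exact_mod_cast congrArg Real.toEReal hre
        rw [hJ0γ, hz0]
        constructor
        · exact_mod_cast hψmin z hz
        · intro h
          exact hψeq z hz (by exact_mod_cast h)
      · -- δ < z
        have hδz : δ < z := not_le.1 hzδ
        have hjz : (0:ℝ) < (j:ℝ)*z := mul_pos hjpos hz
        have hb1 : ((LJr k₁ k₂ ((j:ℝ)*δ) : ℝ):EReal) ≤ LJ k₁ k₂ ((j:ℝ)*z) := by
          rw [hLJcoe _ hjz]
          have h4 : 4*k₁ ≤ k₂*((j:ℝ)*δ)^6 := by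
            have he : k₂*((j:ℝ)*δ)^6 = 2*k₁*m := by
              rw [mul_pow, hδ6, hmdef]; field_simp
            have h128 : k₁*64 ≤ k₁*m := mul_le_mul_of_nonneg_left hm64 hk₁.le
            rw [he]; linarith only [h128, hk₁]
          exact_mod_cast LJr_mono k₁ k₂ hk₁ (mul_pos hjpos hδpos)
            (mul_le_mul_of_nonneg_left hδz.le hjpos.le) h4
        have hb2 : (((j:ℝ)*(-(k₂^2/(4*k₁))) : ℝ):EReal) ≤ infConv k₁ k₂ j z := by
          have hb : ∀ x:ℝ, 0<x → (-(k₂^2/(4*k₁))) + 0*x ≤ LJr k₁ k₂ x :=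
            fun x hx => by simpa using LJr_ge_min k₁ k₂ hk₁ hx
          have h2 := hinf_ge z _ _ hb
          rwa [show (j:ℝ)*(-(k₂^2/(4*k₁))) + 0*((j:ℝ)*z)
              = (j:ℝ)*(-(k₂^2/(4*k₁))) by ring] at h2
        have hcj : (0:EReal) ≤ ((c/(j:ℝ) : ℝ):EReal) := by
          exact_mod_cast le_of_lt (div_pos hcpos hjpos)
        have hmul := mul_le_mul_of_nonneg_left hb2 hcj
        have hchain : ((LJr k₁ k₂ ((j:ℝ)*δ) + c*(-(k₂^2/(4*k₁))) : ℝ) : EReal)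
            ≤ J0LJ k₁ k₂ K j z := by
          rw [J0LJ, ← hcdef]
          calc ((LJr k₁ k₂ ((j:ℝ)*δ) + c*(-(k₂^2/(4*k₁))) : ℝ) : EReal)
              = ((LJr k₁ k₂ ((j:ℝ)*δ) : ℝ):EReal)
                + ((c/(j:ℝ) : ℝ):EReal) * (((j:ℝ)*(-(k₂^2/(4*k₁))) : ℝ):EReal) := by
                rw [← EReal.coe_mul, ← EReal.coe_add]
                exact_mod_cast congrArg Real.toEReal (by field_simp :
                  LJr k₁ k₂ ((j:ℝ)*δ) + c*(-(k₂^2/(4*k₁)))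
                    = LJr k₁ k₂ ((j:ℝ)*δ) + (c/(j:ℝ))*((j:ℝ)*(-(k₂^2/(4*k₁)))))
            _ ≤ LJ k₁ k₂ ((j:ℝ)*z) + ((c/(j:ℝ) : ℝ):EReal) * infConv k₁ k₂ j z :=
                add_le_add hb1 hmul
        have hstrict : J0LJ k₁ k₂ K j γ < J0LJ k₁ k₂ K j z := by
          apply lt_of_lt_of_le _ hchain
          rw [hJ0γ]
          exact_mod_cast hstar
        exact ⟨hstrict.le, fun h => absurd h hstrict.ne'⟩
    · -- z ≤ 0
      have hjz : ¬ (0 < (j:ℝ)*z) := by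
        push_neg at hz ⊢
        exact mul_nonpos_of_nonneg_of_nonpos hjpos.le hz
      have hz0 : J0LJ k₁ k₂ K j z = ⊤ := by
        rw [J0LJ, ← hcdef, hLJtop _ hjz, hinf_top z (not_lt.1 hz),
          EReal.mul_top_of_pos (by exact_mod_cast div_pos hcpos hjpos)]
        rfl
      constructor
      · rw [hz0]; exact le_top
      · intro h
        rw [hz0, hJ0γ] at h
        exact absurd h.symm (EReal.coe_ne_top _)
  exact ⟨hpart1, fun z => (hpart23 z).1, fun z => (hpart23 z).2⟩
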